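/- Let g be concave and decreasing on [0,a] with g(0) = 0, extended to [0,∞) by g(x) := n·g(a) + g(x − n·a) for n·a ≤ x ≤ (n+1)·a (n ∈ ℕ). Then the extension is subadditive on [0,∞), and it dominates every other subadditive function h on [0,∞) that agrees with g on [0,a]. -/

import Mathlib

/-- Bruckner's extension: if `g` is concave and decreasing on `[0,a]` with `g(0) = 0`, and `G`
extends `g` to `[0,∞)` by `G(x) = n·g(a) + g(x − n·a)` for `n·a ≤ x ≤ (n+1)·a`, then `G` is
subadditive on `[0,∞)` and dominates every subadditive function `h` on `[0,∞)` agreeing with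
`g` on `[0,a]`. -/
theorem bruckner_extension (a : ℝ) (ha : 0 < a) (g G : ℝ → ℝ)
    (hconc : ConcaveOn ℝ (Set.Icc 0 a) g)
    (hanti : AntitoneOn g (Set.Icc 0 a))
    (hg0 : g 0 = 0)
    (hG : ∀ n : ℕ, ∀ x ∈ Set.Icc ((n : ℝ) * a) (((n : ℝ) + 1) * a),
      G x = (n : ℝ) * g a + g (x - (n : ℝ) * a)) :
    (∀ x : ℝ, 0 ≤ x → ∀ y : ℝ, 0 ≤ y → G (x + y) ≤ G x + G y) ∧
    ∀ h : ℝ → ℝ,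
      (∀ x : ℝ, 0 ≤ x → ∀ y : ℝ, 0 ≤ y → h (x + y) ≤ h x + h y) →
      (∀ x ∈ Set.Icc (0 : ℝ) a, h x = g x) →
      ∀ x : ℝ, 0 ≤ x → h x ≤ G x := by
  -- subadditivity of g on [0,a]
  have hsub : ∀ u v : ℝ, 0 ≤ u → 0 ≤ v → u + v ≤ a → g (u + v) ≤ g u + g v := by
    intro u v hu hv huv
    rcases eq_or_lt_of_le (add_nonneg hu hv) with h0 | h0
    · have hu0 : u = 0 := by linarith
      have hv0 : v = 0 := by linarith
      simp [hu0, hv0, hg0]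
    · have hmem : u + v ∈ Set.Icc (0:ℝ) a := ⟨h0.le, huv⟩
      have h0mem : (0:ℝ) ∈ Set.Icc (0:ℝ) a := ⟨le_refl _, ha.le⟩
      have key : ∀ w : ℝ, 0 ≤ w → w ≤ u + v → w / (u+v) * g (u+v) ≤ g w := by
        intro w hw hw'
        have h1 := hconc.2 hmem h0mem
          (div_nonneg hw h0.le)
          (by
            have : w / (u+v) ≤ 1 := (div_le_one h0).mpr hw'
            linarith : (0:ℝ) ≤ 1 - w/(u+v))
          (by ring)
        simp only [smul_eq_mul, hg0, mul_zero, add_zero] at h1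
        have e1 : w/(u+v) * (u+v) = w := div_mul_cancel₀ w h0.ne'
        rw [e1] at h1
        exact h1
      have k1 := key u hu (by linarith)
      have k2 := key v hv (by linarith)
      have e : u/(u+v) + v/(u+v) = 1 := by field_simp
      have s1 : u/(u+v) * g (u+v) + v/(u+v) * g (u+v) = g (u+v) := by
        rw [← add_mul, e, one_mul]
      linarith
  -- concavity inequality for the overflow case
  have hsub2 : ∀ u v : ℝ, u ∈ Set.Icc 0 a → v ∈ Set.Icc 0 a → a ≤ u + v →
      g a + g (u + v - a) ≤ g u + g v := by
    intro u v ⟨hu0, hua⟩ ⟨hv0, hva⟩ huv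
    have hsmem : u + v - a ∈ Set.Icc (0:ℝ) a := ⟨by linarith, by linarith⟩
    have hamem : a ∈ Set.Icc (0:ℝ) a := ⟨ha.le, le_refl _⟩
    rcases eq_or_lt_of_le (by linarith : u + v ≤ 2*a) with h2 | h2
    · have hu' : u = a := by linarith
      have hv' : v = a := by linarith
      have hs' : u + v - a = a := by linarith
      rw [hs', hu', hv']
    · have hc : 0 < 2*a - u - v := by linarith
      have key : ∀ w : ℝ, u + v - a ≤ w → w ≤ a →
          (a - w)/(2*a-u-v) * g (u+v-a) + (1 - (a-w)/(2*a-u-v)) * g a ≤ g w := by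
        intro w hw1 hw2
        have h1 := hconc.2 hsmem hamem
          (div_nonneg (by linarith : (0:ℝ) ≤ a - w) hc.le)
          (by
            have : (a-w)/(2*a-u-v) ≤ 1 := (div_le_one hc).mpr (by linarith)
            linarith : (0:ℝ) ≤ 1 - (a-w)/(2*a-u-v))
          (by ring)
        simp only [smul_eq_mul] at h1
        have e1 : (a-w)/(2*a-u-v) * (u+v-a) + (1 - (a-w)/(2*a-u-v)) * a = w := by
          have hd : (a-w)/(2*a-u-v) * (2*a-u-v) = a - w := div_mul_cancel₀ _ hc.ne'
          linear_combination (-1:ℝ) * hd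
        rw [e1] at h1
        exact h1
      have k1 := key u (by linarith) hua
      have k2 := key v (by linarith) hva
      have e : (a-u)/(2*a-u-v) + (a-v)/(2*a-u-v) = 1 := by
        rw [← add_div, div_eq_one_iff_eq hc.ne']
        ring
      have s1 : (a-u)/(2*a-u-v) * g (u+v-a) + (a-v)/(2*a-u-v) * g (u+v-a) = g (u+v-a) := by
        rw [← add_mul, e, one_mul]
      have s2 : (1 - (a-u)/(2*a-u-v)) * g a + (1 - (a-v)/(2*a-u-v)) * g a = g a := by
        rw [← add_mul]
        have e2 : (1 - (a-u)/(2*a-u-v)) + (1 - (a-v)/(2*a-u-v)) = 1 := by linarith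
        rw [e2, one_mul]
      linarith
  -- floor decomposition
  have hfloor : ∀ x : ℝ, 0 ≤ x → (↑(⌊x/a⌋₊) : ℝ) * a ≤ x ∧ x ≤ (↑(⌊x/a⌋₊) + 1) * a := by
    intro x hx
    have h1 : (↑(⌊x/a⌋₊) : ℝ) ≤ x / a := Nat.floor_le (by positivity)
    have h2 : x / a < ↑(⌊x/a⌋₊) + 1 := Nat.lt_floor_add_one _
    constructor
    · calc (↑(⌊x/a⌋₊) : ℝ) * a ≤ (x/a) * a := by nlinarith
        _ = x := by field_simp
    · have : x = (x/a) * a := by field_simp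
      nlinarith
  constructor
  · -- subadditivity of G
    intro x hx y hy
    obtain ⟨hm1, hm2⟩ := hfloor x hx
    obtain ⟨hn1, hn2⟩ := hfloor y hy
    set m := ⌊x/a⌋₊
    set n := ⌊y/a⌋₊
    set u := x - (m:ℝ) * a with hudef
    set v := y - (n:ℝ) * a with hvdef
    have hu0 : 0 ≤ u := by simp [hudef]; linarith
    have hua : u ≤ a := by simp [hudef]; nlinarith
    have hv0 : 0 ≤ v := by simp [hvdef]; linarith
    have hva : v ≤ a := by simp [hvdef]; nlinarith
    have hGx : G x = (m:ℝ) * g a + g u := hG m x ⟨hm1, hm2⟩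
    have hGy : G y = (n:ℝ) * g a + g v := hG n y ⟨hn1, hn2⟩
    rcases le_or_gt (u + v) a with hcase | hcase
    · have hz := hG (m + n) (x + y) ⟨by push_cast; nlinarith, by push_cast; nlinarith⟩
      have e : x + y - (↑(m+n) : ℝ) * a = u + v := by push_cast; simp [hudef, hvdef]; ring
      rw [e] at hz
      have := hsub u v hu0 hv0 hcase
      rw [hz, hGx, hGy]; push_cast; linarith
    · have hz := hG (m + n + 1) (x + y) ⟨by push_cast; nlinarith, by push_cast; nlinarith⟩
      have e : x + y - (↑(m+n+1) : ℝ) * a = u + v - a := by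
        push_cast; simp [hudef, hvdef]; ring
      rw [e] at hz
      have := hsub2 u v ⟨hu0, hua⟩ ⟨hv0, hva⟩ hcase.le
      rw [hz, hGx, hGy]; push_cast; linarith
  · -- domination
    intro h hhsub hag
    have key : ∀ n : ℕ, ∀ x : ℝ, (n:ℝ) * a ≤ x → x ≤ ((n:ℝ) + 1) * a → h x ≤ G x := by
      intro n
      induction n with
      | zero =>
        intro x h1 h2
        simp only [Nat.cast_zero, zero_mul, zero_add, one_mul] at h1 h2
        rw [hG 0 x ⟨by simpa using h1, by simpa using h2⟩]
        rw [hag x ⟨h1, h2⟩]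
        simp
      | succ n ih =>
        intro x h1 h2
        push_cast at h1 h2
        have hna : (0:ℝ) ≤ (n:ℝ) * a := by positivity
        have hxa1 : (n:ℝ) * a ≤ x - a := by linarith
        have hxa2 : x - a ≤ ((n:ℝ) + 1) * a := by linarith
        have h3 := hhsub (x - a) (by linarith) a ha.le
        have e : x - a + a = x := by ring
        rw [e] at h3
        have h4 := ih (x - a) hxa1 hxa2
        have h5 : h a = g a := hag a ⟨ha.le, le_refl a⟩
        rw [hG n (x - a) ⟨hxa1, hxa2⟩] at h4
        rw [hG (n+1) x ⟨by push_cast; linarith, by push_cast; linarith⟩]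
        have e2 : x - (↑(n+1) : ℝ) * a = x - a - (n:ℝ) * a := by push_cast; ring
        rw [e2]
        push_cast
        linarith
    intro x hx
    obtain ⟨h1, h2⟩ := hfloor x hx
    exact key _ x h1 h2
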